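/- Every tensor (of a fixed rank R over the mixed single/pair index set) that is invariant under the natural action of the symmetric group S_N on particle labels is a linear combination of the binary invariants B(𝒢) over unlabeled graphs 𝒢, provided N is large enough that all entries with graphs isomorphic to a given 𝒢 form a single S_N-orbit. -/

import Mathlib

/-- An index: a single particle label (loop) or an unordered pair of distinct labels. -/
abbrev Idx (N : ℕ) := Fin N ⊕ {p : Sym2 (Fin N) // ¬ p.IsDiag}

/-- The edge associated to an index. -/
def edgeOf {N : ℕ} : Idx N → Sym2 (Fin N)
  | Sum.inl i => s(i, i)
  | Sum.inr p => p.1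

/-- Labels (vertices) occurring in an index tuple. -/
def labels {N R : ℕ} (t : Fin R → Idx N) : Set (Fin N) :=
  {v | ∃ k, v ∈ edgeOf (t k)}

/-- Isomorphism of the labeled multigraphs of two index tuples. -/
def GraphIso {N R : ℕ} (t t' : Fin R → Idx N) : Prop :=
  ∃ f : Fin N → Fin N, Set.InjOn f (labels t) ∧
    ∀ k, Sym2.map f (edgeOf (t k)) = edgeOf (t' k)

/-- The action of a permutation of particle labels on an index. -/
def permIdx {N : ℕ} (σ : Equiv.Perm (Fin N)) : Idx N → Idx N
  | Sum.inl i => Sum.inl (σ i)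
  | Sum.inr p => Sum.inr ⟨Sym2.map σ p.1, fun h => p.2 ((Sym2.isDiag_map σ.injective).mp h)⟩

/-- The natural action of `S_N` on index tuples. -/
def permAction {N R : ℕ} (σ : Equiv.Perm (Fin N)) (t : Fin R → Idx N) : Fin R → Idx N :=
  fun k => permIdx σ (t k)

open Classical in
/-- The binary invariant of the graph represented by the tuple `t₀`. -/
noncomputable def Binv {N R : ℕ} (t₀ : Fin R → Idx N) : (Fin R → Idx N) → ℝ :=
  fun t => if GraphIso t₀ t then 1 else 0

/-- Every `S_N`-invariant tensor of rank `R` is a linear combination (span member) of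
the binary invariants, provided `N` is large enough that any two index tuples with
isomorphic graphs lie in a single `S_N`-orbit. -/

lemma edgeOf_permIdx {N : ℕ} (σ : Equiv.Perm (Fin N)) (x : Idx N) :
    edgeOf (permIdx σ x) = Sym2.map σ (edgeOf x) := by
  cases x <;> simp [edgeOf, permIdx]

lemma graphIso_refl {N R : ℕ} (t : Fin R → Idx N) : GraphIso t t :=
  ⟨id, Set.injOn_id _, fun k => by simp⟩

lemma graphIso_perm_iff {N R : ℕ} (σ : Equiv.Perm (Fin N)) (s t : Fin R → Idx N) :
    GraphIso s (permAction σ t) ↔ GraphIso s t := by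
  constructor
  · rintro ⟨f, hf, he⟩
    refine ⟨(σ.symm : Fin N → Fin N) ∘ f, fun x hx y hy h => hf hx hy (σ.symm.injective h), fun k => ?_⟩
    · have := he k
      simp only [permAction, edgeOf_permIdx] at this
      rw [← Sym2.map_map, this, Sym2.map_map]
      have : (σ.symm : Fin N → Fin N) ∘ (σ : Fin N → Fin N) = id := by
        funext x; simp
      rw [this, Sym2.map_id, id]
  · rintro ⟨f, hf, he⟩
    refine ⟨(σ : Fin N → Fin N) ∘ f, fun x hx y hy h => hf hx hy (σ.injective h), fun k => ?_⟩
    · simp only [permAction, edgeOf_permIdx, ← Sym2.map_map, he k]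


theorem invariant_tensor_in_span_of_binary_invariants (N R : ℕ)
    (horbit : ∀ t t' : Fin R → Idx N, GraphIso t t' →
      ∃ σ : Equiv.Perm (Fin N), permAction σ t = t')
    (T : (Fin R → Idx N) → ℝ)
    (hT : ∀ (σ : Equiv.Perm (Fin N)) (t : Fin R → Idx N), T (permAction σ t) = T t) :
    T ∈ Submodule.span ℝ (Set.range (Binv (N := N) (R := R))) := by
  classical
  have key : T = ∑ t₀ : Fin R → Idx N,
      (T t₀ / ((Finset.univ.filter (fun s => GraphIso s t₀)).card : ℝ)) • Binv t₀ := by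
    funext t
    have hTs : ∀ t₀ : Fin R → Idx N, GraphIso t₀ t → T t₀ = T t := by
      intro t₀ h
      obtain ⟨σ, hσ⟩ := horbit t₀ t h
      rw [← hσ, hT]
    have hcard : ∀ t₀ : Fin R → Idx N, GraphIso t₀ t →
        (Finset.univ.filter (fun s => GraphIso s t₀)).card
        = (Finset.univ.filter (fun s => GraphIso s t)).card := by
      intro t₀ h
      obtain ⟨σ, hσ⟩ := horbit t₀ t h
      subst hσ
      congr 1
      ext s
      simp [graphIso_perm_iff]
    have hpos : 0 < (Finset.univ.filter (fun s => GraphIso s t)).card := by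
      refine Finset.card_pos.mpr ⟨t, ?_⟩
      simp [graphIso_refl]
    simp only [Finset.sum_apply, Pi.smul_apply, Binv, smul_eq_mul, mul_ite, mul_one, mul_zero]
    rw [← Finset.sum_filter,
      Finset.sum_congr rfl
        (g := fun _ => T t / ((Finset.univ.filter (fun s => GraphIso s t)).card : ℝ))
        (fun t₀ ht₀ => by
          rw [Finset.mem_filter] at ht₀
          rw [hTs t₀ ht₀.2, hcard t₀ ht₀.2]),
      Finset.sum_const, nsmul_eq_mul]
    field_simp
  rw [key]
  exact Submodule.sum_mem _ fun t₀ _ => Submodule.smul_mem _ _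
    (Submodule.subset_span ⟨t₀, rfl⟩)
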